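/- Let r < 0 be a real number, let m be an integer with r < m ≤ 0, and let x ∈ ℂ. Then the series Σ_{n=0}^{∞} ( r(r+1)⋯(r+n−1)/n! ) · (n+x)^{|m|} converges and its sum is 0, i.e. the function n ↦ ((ascending Pochhammer) (r)_n / n!) · (n+x)^{−m} has sum 0 (HasSum to 0), where (n+x)^{−m} is the natural-number power (n+x)^{|m|} of the complex number n+x since −m ≥ 0. -/

import Mathlib

open Complex Finset Filter Topology

private noncomputable def aa (r : ℝ) (n : ℕ) : ℝ :=
  (∏ k ∈ Finset.range n, (r + (k : ℝ))) / (n.factorial : ℝ)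

private lemma prod_shift (r : ℝ) (n : ℕ) :
    ∏ k ∈ Finset.range (n + 1), (r + (k : ℝ)) =
      (∏ k ∈ Finset.range n, (r + 1 + (k : ℝ))) * r := by
  rw [Finset.prod_range_succ']
  congr 1
  · refine Finset.prod_congr rfl fun k _ => by push_cast; ring
  · simp

private lemma aa_succ (r : ℝ) (n : ℕ) : aa r (n + 1) = aa r n * ((r + n) / (n + 1)) := by
  simp only [aa, Finset.prod_range_succ, Nat.factorial_succ, div_mul_div_comm]
  push_cast
  rw [mul_comm ((n.factorial : ℝ)) ((n : ℝ) + 1)]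

private lemma aa_mul (r : ℝ) (n : ℕ) :
    aa r (n + 1) * ((n : ℝ) + 1) = r * aa (r + 1) n := by
  have h1 : ((n.factorial : ℝ)) ≠ 0 := Nat.cast_ne_zero.mpr n.factorial_ne_zero
  have h2 : ((n : ℝ) + 1) ≠ 0 := by positivity
  simp only [aa, Nat.factorial_succ]
  rw [prod_shift]
  push_cast
  field_simp

private lemma partial_sum_eq (r : ℝ) (N : ℕ) :
    ∑ n ∈ Finset.range (N + 1), aa r n =
      (∏ k ∈ Finset.range N, (r + 1 + (k : ℝ))) / (N.factorial : ℝ) := by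
  induction N with
  | zero => simp [aa]
  | succ N ih =>
      rw [Finset.sum_range_succ, ih]
      have h1 : ((N.factorial : ℝ)) ≠ 0 := Nat.cast_ne_zero.mpr N.factorial_ne_zero
      have h2 : ((N : ℝ) + 1) ≠ 0 := by positivity
      rw [show aa r (N + 1) = ((∏ k ∈ Finset.range N, (r + 1 + (k : ℝ))) * r)
        / (((N : ℝ) + 1) * (N.factorial : ℝ)) by
          simp only [aa, prod_shift, Nat.factorial_succ]; push_cast; ring_nf]
      rw [Finset.prod_range_succ, Nat.factorial_succ]
      push_cast
      field_simp
      ring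

/-- The product ∏ (s+k)/(k+1) tends to 0 when s < 1. -/
private lemma prod_tendsto_zero {s : ℝ} (hs : s < 1) :
    Tendsto (fun N : ℕ => ∏ k ∈ Finset.range N, ((s + k) / (k + 1))) atTop (𝓝 0) := by
  set q : ℕ → ℝ := fun k => (s + k) / (k + 1) with hq
  set K : ℕ := ⌈-s⌉₊ with hK
  have hsK : 0 ≤ s + K := by
    have := Nat.le_ceil (-s)
    linarith
  set C : ℝ := |∏ k ∈ Finset.range K, q k| with hC
  set H : ℕ → ℝ := fun N => ∑ i ∈ Finset.range N, (1 : ℝ) / (i + 1) with hH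
  have hbound : ∀ N, K ≤ N →
      |∏ k ∈ Finset.range N, q k| ≤ C * Real.exp (-((1 - s) * (H N - H K))) := by
    intro N hN
    rw [← Finset.prod_range_mul_prod_Ico _ hN, abs_mul]
    have hqpos : ∀ k ∈ Finset.Ico K N, 0 ≤ q k := by
      intro k hk
      have hk' : K ≤ k := (Finset.mem_Ico.mp hk).1
      have hks : 0 ≤ s + k := by
        have : (K : ℝ) ≤ k := by exact_mod_cast hk'
        linarith
      have hk1 : (0:ℝ) < (k:ℝ) + 1 := by positivity
      exact div_nonneg hks hk1.le
    have habs : |∏ k ∈ Finset.Ico K N, q k| = ∏ k ∈ Finset.Ico K N, q k :=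
      abs_of_nonneg (Finset.prod_nonneg hqpos)
    rw [habs]
    refine mul_le_mul_of_nonneg_left ?_ (abs_nonneg _)
    calc ∏ k ∈ Finset.Ico K N, q k
        ≤ ∏ k ∈ Finset.Ico K N, Real.exp (-(1 - s) / (k + 1)) := by
          refine Finset.prod_le_prod hqpos fun k hk => ?_
          have hk1 : ((k:ℝ) + 1) ≠ 0 := by positivity
          have hqk : q k = -(1 - s) / (k + 1) + 1 := by
            simp only [hq]
            field_simp
            ring
          rw [hqk]
          exact Real.add_one_le_exp _
      _ = Real.exp (∑ k ∈ Finset.Ico K N, -(1 - s) / (k + 1)) := (Real.exp_sum _ _).symm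
      _ = Real.exp (-((1 - s) * (H N - H K))) := by
          congr 1
          simp only [hH]
          rw [← Finset.sum_Ico_eq_sub _ hN, Finset.mul_sum, ← Finset.sum_neg_distrib]
          refine Finset.sum_congr rfl fun k _ => by ring
  have hHtop : Tendsto H atTop atTop := Real.tendsto_sum_range_one_div_nat_succ_atTop
  have hexp : Tendsto (fun N => C * Real.exp (-((1 - s) * (H N - H K)))) atTop (𝓝 0) := by
    have h2 : Tendsto (fun N => H N - H K) atTop atTop :=
      tendsto_atTop_add_const_right _ _ hHtop
    have h3 : Tendsto (fun N => (1 - s) * (H N - H K)) atTop atTop :=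
      h2.const_mul_atTop (by linarith)
    have h4 : Tendsto (fun N => -((1 - s) * (H N - H K))) atTop atBot :=
      tendsto_neg_atBot_iff.mpr h3
    have h5 := (Real.tendsto_exp_atBot.comp h4).const_mul C
    rw [mul_zero] at h5
    exact h5
  have h0 : Tendsto (fun N => |∏ k ∈ Finset.range N, q k|) atTop (𝓝 0) := by
    refine squeeze_zero' ?_ ?_ hexp
    · exact Eventually.of_forall fun N => abs_nonneg _
    · exact eventually_atTop.mpr ⟨K, hbound⟩
  exact (tendsto_zero_iff_abs_tendsto_zero _).mpr h0

private lemma tendsto_partial_sums (r : ℝ) (hr : r < 0) :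
    Tendsto (fun N : ℕ => ∑ n ∈ Finset.range N, aa r n) atTop (𝓝 0) := by
  have key : Tendsto (fun N : ℕ => ∑ n ∈ Finset.range (N + 1), aa r n) atTop (𝓝 0) := by
    have heq : ∀ N : ℕ, ∑ n ∈ Finset.range (N + 1), aa r n =
        ∏ k ∈ Finset.range N, ((r + 1 + k) / (k + 1)) := by
      intro N
      rw [partial_sum_eq]
      have hfact : ((N.factorial : ℝ)) = ∏ x ∈ Finset.range N, ((x:ℝ) + 1) := by
        rw [← Finset.prod_range_add_one_eq_factorial]
        push_cast
        rfl
      rw [hfact, ← Finset.prod_div_distrib]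
    simp only [heq]
    exact prod_tendsto_zero (by linarith : r + 1 < 1)
  exact (tendsto_add_atTop_iff_nat 1).mp key

private lemma summable_abs_aa (r : ℝ) (hr : r < 0) : Summable (fun n => |aa r n|) := by
  set K : ℕ := ⌈-r⌉₊ with hK
  have hrK : 0 ≤ r + K := by have := Nat.le_ceil (-r); linarith
  have hsign : (∀ n, 0 ≤ aa r (K + n)) ∨ (∀ n, aa r (K + n) ≤ 0) := by
    rcases le_or_gt 0 (aa r K) with h | h
    · left
      intro n
      induction n with
      | zero => simpa using h
      | succ n ih =>
          have hn : (0:ℝ) ≤ (n:ℝ) := Nat.cast_nonneg n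
          have hge : 0 ≤ r + ((K + n : ℕ) : ℝ) := by push_cast; linarith
          rw [show K + (n+1) = (K + n) + 1 by ring, aa_succ]
          have h2 : (0:ℝ) < ((K + n : ℕ):ℝ) + 1 := by positivity
          exact mul_nonneg ih (div_nonneg hge h2.le)
    · right
      intro n
      induction n with
      | zero => simpa using h.le
      | succ n ih =>
          have hn : (0:ℝ) ≤ (n:ℝ) := Nat.cast_nonneg n
          have hge : 0 ≤ r + ((K + n : ℕ) : ℝ) := by push_cast; linarith
          rw [show K + (n+1) = (K + n) + 1 by ring, aa_succ]
          have h2 : (0:ℝ) < ((K + n : ℕ):ℝ) + 1 := by positivity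
          exact mul_nonpos_of_nonpos_of_nonneg ih (div_nonneg hge h2.le)
  have h2 : ∀ N : ℕ, ∑ n ∈ Finset.range N, aa r (K + n)
      = (∑ n ∈ Finset.range (K + N), aa r n) - ∑ n ∈ Finset.range K, aa r n := by
    intro N
    rw [← Finset.sum_Ico_eq_sub _ (Nat.le_add_right K N), Finset.sum_Ico_eq_sum_range]
    simp
  have h1 : Tendsto (fun N : ℕ => ∑ n ∈ Finset.range (K + N), aa r n) atTop (𝓝 0) := by
    have h := (tendsto_partial_sums r hr).comp (tendsto_add_atTop_nat K)
    refine h.congr fun N => ?_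
    simp only [Function.comp_apply]
    rw [Nat.add_comm]
  have htail : Tendsto (fun N : ℕ => ∑ n ∈ Finset.range N, aa r (K + n)) atTop
      (𝓝 (0 - ∑ n ∈ Finset.range K, aa r n)) := by
    simp only [h2]
    exact h1.sub tendsto_const_nhds
  have hsum_tail : Summable (fun n => |aa r (K + n)|) := by
    rcases hsign with hpos | hneg
    · have hmono : Monotone (fun N : ℕ => ∑ n ∈ Finset.range N, aa r (K + n)) := by
        intro i j hij
        exact Finset.sum_le_sum_of_subset_of_nonneg (Finset.range_subset_range.mpr hij)
          (fun k _ _ => hpos k)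
      have hb := fun N => hmono.ge_of_tendsto htail N
      have hsum : Summable (fun n => aa r (K + n)) := summable_of_sum_range_le hpos hb
      exact hsum.abs
    · have hmono : Monotone (fun N : ℕ => ∑ n ∈ Finset.range N, -aa r (K + n)) := by
        intro i j hij
        exact Finset.sum_le_sum_of_subset_of_nonneg (Finset.range_subset_range.mpr hij)
          (fun k _ _ => neg_nonneg.mpr (hneg k))
      have htail' : Tendsto (fun N : ℕ => ∑ n ∈ Finset.range N, -aa r (K + n)) atTop
          (𝓝 (-(0 - ∑ n ∈ Finset.range K, aa r n))) := by
        refine htail.neg.congr fun N => ?_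
        rw [← Finset.sum_neg_distrib]
      have hb := fun N => hmono.ge_of_tendsto htail' N
      have hsum : Summable (fun n => -aa r (K + n)) :=
        summable_of_sum_range_le (fun k => neg_nonneg.mpr (hneg k)) hb
      exact hsum.abs.congr fun n => abs_neg _
  exact (summable_nat_add_iff K).mp (hsum_tail.congr fun n => by rw [Nat.add_comm])

private lemma hasSum_aa (r : ℝ) (hr : r < 0) : HasSum (fun n => aa r n) 0 := by
  have hnorm : Summable (fun n => ‖aa r n‖) := by
    simpa [Real.norm_eq_abs] using summable_abs_aa r hr
  exact (hasSum_iff_tendsto_nat_of_summable_norm hnorm).mpr (tendsto_partial_sums r hr)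

private lemma hasSum_aa_pow (p : ℕ) : ∀ (r : ℝ), r + p < 0 → ∀ x : ℂ,
    HasSum (fun n : ℕ => ((aa r n : ℝ) : ℂ) * ((n : ℂ) + x) ^ p) 0 := by
  induction p with
  | zero =>
      intro r hrp x
      simp only [pow_zero, mul_one]
      have h := Complex.hasSum_ofReal.mpr (hasSum_aa r (by simpa using hrp))
      simpa using h
  | succ p ih =>
      intro r hrp x
      have hr1 : (r + 1) + p < 0 := by push_cast at hrp ⊢; linarith
      have hr0 : r + p < 0 := by push_cast at hrp ⊢; linarith
      have h1 := (ih (r + 1) hr1 (x + 1)).mul_left (r : ℂ)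
      rw [mul_zero] at h1
      have h2 := (ih r hr0 x).mul_left x
      rw [mul_zero] at h2
      set g : ℕ → ℂ := fun n => ((aa r n : ℝ) : ℂ) * (n : ℂ) * ((n : ℂ) + x) ^ p with hgdef
      have hterm : ∀ n : ℕ, ((aa r (n + 1) : ℝ) : ℂ) * ((n : ℂ) + 1)
          = (r : ℂ) * ((aa (r + 1) n : ℝ) : ℂ) := by
        intro n
        have h := congrArg (fun t : ℝ => (t : ℂ)) (aa_mul r n)
        push_cast at h
        exact h
      have hg1 : ∀ n : ℕ, g (n + 1) = (r : ℂ) * (((aa (r + 1) n : ℝ) : ℂ)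
          * ((n : ℂ) + (x + 1)) ^ p) := by
        intro n
        simp only [hgdef]
        push_cast
        rw [show ((n : ℂ) + 1 + x) = ((n : ℂ) + (x + 1)) by ring]
        rw [hterm n, mul_assoc]
      have h3 : HasSum (fun n => g (n + 1)) 0 := by
        simp only [hg1]
        exact h1
      have h4 := (hasSum_nat_add_iff (f := g) 1).mp h3
      have hg0 : g 0 = 0 := by simp [hgdef]
      have hgsum : HasSum g 0 := by
        simpa [hg0] using h4
      have hfull := hgsum.add h2
      rw [add_zero] at hfull
      have hfun : (fun n : ℕ => g n + x * (((aa r n : ℝ) : ℂ) * ((n : ℂ) + x) ^ p))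
          = fun n : ℕ => ((aa r n : ℝ) : ℂ) * ((n : ℂ) + x) ^ (p + 1) := by
        funext n
        simp only [hgdef]
        ring
      rwa [hfun] at hfull

theorem multiple_hurwitz_zeta_vanishing (r : ℝ) (hr : r < 0) (m : ℤ)
    (hm₁ : r < (m : ℝ)) (hm₂ : m ≤ 0) (x : ℂ) :
    HasSum
      (fun n : ℕ =>
        (((∏ k ∈ Finset.range n, (r + (k : ℝ))) / (n.factorial : ℝ) : ℝ) : ℂ) *
          ((n : ℂ) + x) ^ (-m).toNat)
      0 := by
  have h0 : (((-m).toNat : ℤ)) = -m := Int.toNat_of_nonneg (by omega)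
  have h : (((-m).toNat : ℕ) : ℝ) = -(m : ℝ) := by exact_mod_cast congrArg (fun z : ℤ => (z : ℝ)) h0
  have hp : r + ((-m).toNat : ℕ) < 0 := by rw [h]; linarith
  exact hasSum_aa_pow (-m).toNat r hp x
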